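/- Let S be a supercharacter theory of a finite group G and define V_i(S) as V_1(S) = V(S), V_i(S) = [V_{i-1}(S), S]. Then G is S-nilpotent if and only if the descending series V_i(S) terminates at the trivial subgroup. -/

import Mathlib

open scoped BigOperators Pointwise

/-- `f : G → ℂ` is an irreducible character of `G`. -/
def IsIrrChar (G : Type) [Group G] [Fintype G] (f : G → ℂ) : Prop :=
  ∃ V : FDRep ℂ G, CategoryTheory.Simple V ∧ V.character = f

/-- A supercharacter theory of a finite group `G` (Diaconis–Isaacs): a partition
`parts` of the set of irreducible characters of `G` together with a partition of `G`
into `S`-classes (`cls g` is the class of `g`), such that `{1}` is a class, the number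
of parts equals the number of classes, and each supercharacter
`σ_X = ∑ χ ∈ X, χ(1)·χ` is constant on every class. -/
structure SCT (G : Type) [Group G] [Fintype G] where
  parts : Finset (Finset (G → ℂ))
  cls : G → Set G
  parts_cover : ∀ f : G → ℂ, IsIrrChar G f ↔ ∃ X ∈ parts, f ∈ X
  parts_disj : ∀ X ∈ parts, ∀ Y ∈ parts, X ≠ Y → Disjoint X Y
  parts_nonempty : ∀ X ∈ parts, X.Nonempty
  mem_cls : ∀ g : G, g ∈ cls g
  cls_eq : ∀ g h : G, h ∈ cls g → cls h = cls g
  cls_one : cls (1 : G) = {1}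
  card_eq : parts.card = Nat.card (Set.range cls)
  const : ∀ X ∈ parts, ∀ g h : G, h ∈ cls g →
    (∑ χ ∈ X, χ 1 * χ h) = (∑ χ ∈ X, χ 1 * χ g)

variable {G : Type} [Group G] [Fintype G]

namespace SCT

/-- The supercharacter attached to a part `X`. -/
noncomputable def superchar (_S : SCT G) (X : Finset (G → ℂ)) : G → ℂ := fun g => ∑ χ ∈ X, χ 1 * χ g

/-- The set `Irr(S)` of `S`-characters. -/
def Irr (S : SCT G) : Set (G → ℂ) := {f | ∃ X ∈ S.parts, f = S.superchar X}

end SCT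

/-- The kernel of a character-like function `f : G → ℂ`. -/
def charKer (f : G → ℂ) : Subgroup G where
  carrier := {g | ∀ h, f (g * h) = f h}
  one_mem' := by intro h; simp
  mul_mem' := by intro a b ha hb h; rw [mul_assoc, ha, hb]
  inv_mem' := by
    intro a ha h
    have := ha (a⁻¹ * h)
    rw [mul_inv_cancel_left] at this
    exact this.symm

namespace SCT

/-- `[H,S]`, the subgroup generated by the `g⁻¹k` with `g ∈ H`, `k ∈ Cl_S(g)`. -/
def comm (S : SCT G) (H : Subgroup G) : Subgroup G :=
  Subgroup.closure {x | ∃ g ∈ H, ∃ k ∈ S.cls g, x = g⁻¹ * k}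

/-- `[G,S]`. -/
def derived (S : SCT G) : Subgroup G := S.comm ⊤

/-- `Irr(S | N)`: the `S`-characters whose kernel does not contain `N`. -/
def IrrRel (S : SCT G) (N : Subgroup G) : Set (G → ℂ) :=
  {f | f ∈ S.Irr ∧ ¬ N ≤ charKer f}

/-- `g` is an `S`-Camina element: all of `Irr(S | [G,S])` vanishes at `g`. -/
def IsCaminaElt (S : SCT G) (g : G) : Prop :=
  ∀ f ∈ S.IrrRel S.derived, f g = 0

/-- `N` is `S`-normal: a union of `S`-classes. -/
def IsNormal (S : SCT G) (N : Subgroup G) : Prop :=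
  ∀ g ∈ N, S.cls g ⊆ N

/-- `(G,N)` is a generalised `S`-Camina pair. -/
def IsGCP (S : SCT G) (N : Subgroup G) : Prop :=
  S.IsNormal N ∧ ∀ g : G, g ∉ N → S.IsCaminaElt g

/-- The set `Z(S)` of elements with singleton `S`-class. -/
def centerSet (S : SCT G) : Set G := {g | S.cls g = {g}}

/-- The vanishing-off subgroup `V(S | N)`. -/
def V (S : SCT G) (N : Subgroup G) : Subgroup G :=
  Subgroup.closure {g | ∃ f ∈ S.IrrRel N, f g ≠ 0}

/-- `V(S) = V(S | [G,S])`. -/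
def VS (S : SCT G) : Subgroup G := S.V S.derived

/-- `U(S | N)`: the product of all `S`-normal subgroups `H` with `V(S | H) ≤ N`. -/
def U (S : SCT G) (N : Subgroup G) : Subgroup G :=
  ⨆ (H : Subgroup G) (_ : S.IsNormal H ∧ S.V H ≤ N), H

/-- The upper `S`-central series: `ζ_0 = 1` and `ζ_{i+1}/ζ_i = Z(S^{G/ζ_i})`,
i.e. `ζ_{i+1}` consists of the `g` whose `S`-class maps onto the single coset `gζ_i`. -/
def zeta (S : SCT G) : ℕ → Subgroup G
  | 0 => ⊥
  | i + 1 => Subgroup.closure {g | ∀ k ∈ S.cls g, g⁻¹ * k ∈ S.zeta i}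

/-- The lower `S`-central series `γ_1 = G`, `γ_{i+1} = [γ_i, S]` (with `γ_0 := G`). -/
def gamma (S : SCT G) : ℕ → Subgroup G
  | 0 => ⊤
  | 1 => ⊤
  | n + 2 => S.comm (S.gamma (n + 1))

/-- The series `V_1(S) = V(S)`, `V_{i+1}(S) = [V_i(S), S]` (with `V_0 := V(S)`). -/
def Vseq (S : SCT G) : ℕ → Subgroup G
  | 0 => S.VS
  | 1 => S.VS
  | n + 2 => S.comm (S.Vseq (n + 1))

/-- `G` is a `VZ(S)`-group: every member of `Irr(S | [G,S])` vanishes off `Z(S)`. -/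
def IsVZ (S : SCT G) : Prop :=
  ∀ f ∈ S.IrrRel S.derived, ∀ g : G, g ∉ S.centerSet → f g = 0

end SCT

namespace SCTAux

open scoped Classical

variable {G : Type} [Group G] [Fintype G]

/-- Unnormalized pairing. -/
noncomputable def pair (f h : G → ℂ) : ℂ := ∑ g : G, f g * h g⁻¹

theorem card_ne_zero_C : (Fintype.card G : ℂ) ≠ 0 :=
  Nat.cast_ne_zero.mpr Fintype.card_ne_zero

theorem pair_simple (V W : FDRep ℂ G) (hV : CategoryTheory.Simple V)
    (hW : CategoryTheory.Simple W) :
    pair V.character W.character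
      = if Nonempty (V ≅ W) then (Fintype.card G : ℂ) else 0 := by
  letI : Invertible ((Nat.card G) : ℂ) :=
    invertibleOfNonzero (Nat.cast_ne_zero.mpr Nat.card_pos.ne')
  have key := @FDRep.char_orthonormal ℂ _ G _ _ _ _ V W hV hW
  rw [Nat.card_eq_fintype_card, inv_mul_eq_iff_eq_mul₀ card_ne_zero_C] at key
  refine key.trans ?_
  split <;> simp

theorem pair_irr {f₁ f₂ : G → ℂ} (h₁ : IsIrrChar G f₁) (h₂ : IsIrrChar G f₂) :
    pair f₁ f₂ = if f₁ = f₂ then (Fintype.card G : ℂ) else 0 := by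
  obtain ⟨V, hV, rfl⟩ := h₁
  obtain ⟨W, hW, rfl⟩ := h₂
  have key := pair_simple V W hV hW
  by_cases hiso : Nonempty (V ≅ W)
  · rw [if_pos hiso] at key
    rw [key, if_pos (FDRep.char_iso hiso.some)]
  · rw [if_neg hiso] at key
    rw [key]
    rw [if_neg]
    intro hEq
    have key2 := pair_simple V V hV hV
    rw [if_pos ⟨CategoryTheory.Iso.refl V⟩] at key2
    rw [hEq] at key
    rw [hEq] at key2
    rw [key] at key2
    exact card_ne_zero_C key2.symm

end SCTAux

namespace SCTAux

variable {G : Type} [Group G] [Fintype G]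

theorem irr_deg {f : G → ℂ} (h : IsIrrChar G f) : ∃ d : ℕ, 0 < d ∧ f 1 = d := by
  obtain ⟨V, hV, rfl⟩ := h
  refine ⟨Module.finrank ℂ V, ?_, FDRep.char_one V⟩
  rcases Nat.eq_zero_or_pos (Module.finrank ℂ V) with h0 | h0
  · exfalso
    haveI : Subsingleton V := by
      rw [← Module.finrank_zero_iff (R := ℂ)]; exact h0
    haveI := hV
    refine CategoryTheory.id_nonzero V ?_
    haveI : Subsingleton ((CategoryTheory.forget (FGModuleCat ℂ)).obj V.V) :=
      inferInstanceAs (Subsingleton V)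
    ext x
    exact Subsingleton.elim _ _
  · exact h0

end SCTAux

namespace SCTAux

variable {G : Type} [Group G] [Fintype G]

theorem pair_superchar (S : SCT G) {X Y : Finset (G → ℂ)} (hX : X ∈ S.parts)
    (hY : Y ∈ S.parts) :
    pair (S.superchar X) (S.superchar Y)
      = if X = Y then (Fintype.card G : ℂ) * S.superchar X 1 else 0 := by
  have hX' : ∀ f ∈ X, IsIrrChar G f := fun f hf => (S.parts_cover f).mpr ⟨X, hX, hf⟩
  have hY' : ∀ f ∈ Y, IsIrrChar G f := fun f hf => (S.parts_cover f).mpr ⟨Y, hY, hf⟩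
  have e1 : pair (S.superchar X) (S.superchar Y)
      = ∑ ψ ∈ Y, ∑ χ ∈ X, (χ 1 * ψ 1) * pair χ ψ := by
    simp only [pair, SCT.superchar, Finset.sum_mul, Finset.mul_sum]
    rw [Finset.sum_comm]
    refine Finset.sum_congr rfl fun ψ _ => ?_
    rw [Finset.sum_comm]
    refine Finset.sum_congr rfl fun χ _ => ?_
    refine Finset.sum_congr rfl fun g _ => ?_
    ring
  rw [e1]
  by_cases hXY : X = Y
  · subst hXY
    rw [if_pos rfl]
    have e2 : ∀ ψ ∈ X, ∑ χ ∈ X, (χ 1 * ψ 1) * pair χ ψ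
        = (Fintype.card G : ℂ) * (ψ 1 * ψ 1) := by
      intro ψ hψ
      rw [Finset.sum_eq_single_of_mem ψ hψ]
      · rw [pair_irr (hX' ψ hψ) (hX' ψ hψ), if_pos rfl]; ring
      · intro χ hχ hne
        rw [pair_irr (hX' χ hχ) (hX' ψ hψ), if_neg hne]; ring
    rw [Finset.sum_congr rfl e2, SCT.superchar, Finset.mul_sum]
  · rw [if_neg hXY]
    refine Finset.sum_eq_zero fun ψ hψ => Finset.sum_eq_zero fun χ hχ => ?_
    have hne : χ ≠ ψ := by
      intro h
      exact (Finset.disjoint_left.mp (S.parts_disj X hX Y hY hXY)) hχ (h ▸ hψ)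
    rw [pair_irr (hX' χ hχ) (hY' ψ hψ), if_neg hne, mul_zero]

end SCTAux

namespace SCTAux

open scoped Classical

variable {G : Type} [Group G] [Fintype G]

theorem pair_sum_left {ι : Type} (s : Finset ι) (c : ι → ℂ) (F : ι → G → ℂ) (h : G → ℂ) :
    pair (fun g => ∑ i ∈ s, c i * F i g) h = ∑ i ∈ s, c i * pair (F i) h := by
  simp only [pair, Finset.sum_mul, Finset.mul_sum]
  rw [Finset.sum_comm]
  exact Finset.sum_congr rfl fun i _ => Finset.sum_congr rfl fun g _ => by ring

theorem superchar_one (S : SCT G) {X : Finset (G → ℂ)} (hX : X ∈ S.parts) :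
    ∃ n : ℕ, 0 < n ∧ S.superchar X 1 = n := by
  have hX' : ∀ f ∈ X, IsIrrChar G f := fun f hf => (S.parts_cover f).mpr ⟨X, hX, hf⟩
  have key : ∀ χ : {χ // χ ∈ X}, ∃ d : ℕ, 0 < d ∧ (χ : G → ℂ) 1 * (χ : G → ℂ) 1 = d := by
    intro χ
    obtain ⟨d, hd, he⟩ := irr_deg (hX' χ χ.2)
    exact ⟨d * d, Nat.mul_pos hd hd, by rw [he]; push_cast; ring⟩
  choose d hd he using key
  obtain ⟨χ₀, hχ₀⟩ := S.parts_nonempty X hX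
  refine ⟨∑ χ : {χ // χ ∈ X}, d χ, ?_, ?_⟩
  · refine Finset.sum_pos' (fun χ _ => Nat.zero_le _) ⟨⟨χ₀, hχ₀⟩, Finset.mem_univ _, hd _⟩
  · rw [SCT.superchar, ← Finset.sum_attach X (fun χ => χ 1 * χ 1), Nat.cast_sum]
    exact Finset.sum_congr rfl fun χ _ => he χ

theorem superchar_one_ne_zero (S : SCT G) {X : Finset (G → ℂ)} (hX : X ∈ S.parts) :
    S.superchar X 1 ≠ 0 := by
  obtain ⟨n, hn, he⟩ := superchar_one S hX
  rw [he]
  exact_mod_cast hn.ne'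

end SCTAux

namespace SCTAux

open scoped Classical

variable {G : Type} [Group G] [Fintype G]

/-- The space of `S`-class functions. -/
noncomputable def CF (S : SCT G) : Submodule ℂ (G → ℂ) where
  carrier := {f | ∀ g h : G, h ∈ S.cls g → f h = f g}
  add_mem' := by intro a b ha hb g h hh; simp only [Pi.add_apply, ha g h hh, hb g h hh]
  zero_mem' := by intro g h _; rfl
  smul_mem' := by intro c f hf g h hh; simp only [Pi.smul_apply, hf g h hh]

noncomputable def cfEquiv (S : SCT G) : CF S ≃ₗ[ℂ] (↥(Set.range S.cls) → ℂ) where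
  toFun f C := f.1 C.2.choose
  map_add' f₁ f₂ := rfl
  map_smul' c f := rfl
  invFun φ := ⟨fun g => φ ⟨S.cls g, ⟨g, rfl⟩⟩, by
    intro g h hh
    have : S.cls h = S.cls g := S.cls_eq g h hh
    simp only
    congr 1
    exact Subtype.ext this⟩
  left_inv f := by
    apply Subtype.ext
    funext g
    have spec : S.cls (⟨S.cls g, ⟨g, rfl⟩⟩ : ↥(Set.range S.cls)).2.choose = S.cls g :=
      (⟨S.cls g, ⟨g, rfl⟩⟩ : ↥(Set.range S.cls)).2.choose_spec
    exact (f.2 _ g (by rw [spec]; exact S.mem_cls g)).symm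
  right_inv φ := by
    funext C
    exact congrArg φ (Subtype.ext C.2.choose_spec)

theorem finrank_CF (S : SCT G) : Module.finrank ℂ (CF S) = S.parts.card := by
  letI : Fintype ↥(Set.range S.cls) := Fintype.ofFinite _
  rw [(cfEquiv S).finrank_eq, Module.finrank_fintype_fun_eq_card, S.card_eq,
    Nat.card_eq_fintype_card]

/-- The supercharacters as elements of `CF S`. -/
noncomputable def scFam (S : SCT G) (X : ↥S.parts) : CF S :=
  ⟨S.superchar ↑X, fun g h hh => S.const ↑X X.2 g h hh⟩

theorem scFam_indep (S : SCT G) : LinearIndependent ℂ (scFam S) := by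
  rw [linearIndependent_iff']
  intro s a hsum Y hY
  have hfun : (fun g => ∑ i ∈ s, a i * S.superchar ↑i g) = (0 : G → ℂ) := by
    funext g
    have := congrArg (fun v : CF S => v.1 g) hsum
    simpa [scFam] using this
  have h1 : pair (fun g => ∑ i ∈ s, a i * S.superchar ↑i g) (S.superchar ↑Y) = 0 := by
    rw [hfun]; simp [pair]
  rw [pair_sum_left] at h1
  rw [Finset.sum_eq_single_of_mem Y hY] at h1
  · rw [pair_superchar S Y.2 Y.2, if_pos rfl] at h1
    rcases mul_eq_zero.mp h1 with h | h
    · exact h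
    · exact absurd h (mul_ne_zero card_ne_zero_C (superchar_one_ne_zero S Y.2))
  · intro i _ hne
    rw [pair_superchar S i.2 Y.2, if_neg (fun h => hne (Subtype.ext h)), mul_zero]

theorem scFam_span (S : SCT G) : Submodule.span ℂ (Set.range (scFam S)) = ⊤ := by
  refine (scFam_indep S).span_eq_top_of_card_eq_finrank' ?_
  rw [finrank_CF, Fintype.card_coe]

theorem exists_coeffs (S : SCT G) {F : G → ℂ} (hF : F ∈ CF S) :
    ∃ c : ↥S.parts → ℂ, ∀ g : G, F g = ∑ X : ↥S.parts, c X * S.superchar ↑X g := by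
  have : (⟨F, hF⟩ : CF S) ∈ Submodule.span ℂ (Set.range (scFam S)) := by
    rw [scFam_span]; trivial
  rw [Submodule.mem_span_range_iff_exists_fun] at this
  obtain ⟨c, hc⟩ := this
  refine ⟨c, fun g => ?_⟩
  have h2 := congrArg (fun v : CF S => v.1 g) hc
  simpa [scFam] using h2.symm

end SCTAux

namespace SCTAux

open scoped Classical

variable {G : Type} [Group G] [Fintype G]

theorem delta_one_mem_CF (S : SCT G) :
    (fun g : G => if g = 1 then (1 : ℂ) else 0) ∈ CF S := by
  intro g h hh
  by_cases hg : g = 1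
  · subst hg
    rw [S.cls_one] at hh
    have : h = 1 := hh
    simp [this]
  · have hh1 : h ≠ 1 := by
      intro h1
      subst h1
      have := S.cls_eq g 1 hh
      rw [S.cls_one] at this
      have : g ∈ ({1} : Set G) := this ▸ S.mem_cls g
      exact hg this
    show (if h = 1 then (1 : ℂ) else 0) = (if g = 1 then (1 : ℂ) else 0)
    rw [if_neg hg, if_neg hh1]

theorem pair_with_delta_one (S : SCT G) (Y : ↥S.parts) :
    pair (fun g : G => if g = 1 then (1 : ℂ) else 0) (S.superchar ↑Y) = S.superchar ↑Y 1 := by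
  rw [pair, Finset.sum_eq_single_of_mem (1 : G) (Finset.mem_univ _)]
  · show (if (1 : G) = 1 then (1 : ℂ) else 0) * S.superchar ↑Y 1⁻¹ = S.superchar ↑Y 1
    rw [if_pos rfl, inv_one, one_mul]
  · intro g _ hg
    show (if g = 1 then (1 : ℂ) else 0) * S.superchar ↑Y g⁻¹ = 0
    rw [if_neg hg, zero_mul]

/-- The regular-character identity for supercharacters. -/
theorem sum_superchar_eq_zero (S : SCT G) {x : G} (hx : x ≠ 1) :
    ∑ X : ↥S.parts, S.superchar ↑X x = 0 := by
  obtain ⟨c, hc⟩ := exists_coeffs S (delta_one_mem_CF S)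
  have hcY : ∀ Y : ↥S.parts, c Y * (Fintype.card G : ℂ) = 1 := by
    intro Y
    have h1 : pair (fun g : G => ∑ X : ↥S.parts, c X * S.superchar ↑X g) (S.superchar ↑Y)
        = S.superchar ↑Y 1 := by
      rw [show (fun g : G => ∑ X : ↥S.parts, c X * S.superchar ↑X g)
          = (fun g : G => if g = 1 then (1 : ℂ) else 0) from funext fun g => (hc g).symm]
      exact pair_with_delta_one S Y
    rw [pair_sum_left, Finset.sum_eq_single_of_mem Y (Finset.mem_univ _)] at h1
    · rw [pair_superchar S Y.2 Y.2, if_pos rfl] at h1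
      have hne := superchar_one_ne_zero S Y.2
      have h2 : (c Y * (Fintype.card G : ℂ)) * S.superchar ↑Y 1
          = 1 * S.superchar ↑Y 1 := by linear_combination h1
      exact mul_right_cancel₀ hne h2
    · intro i _ hne
      rw [pair_superchar S i.2 Y.2, if_neg (fun h => hne (Subtype.ext h)), mul_zero]
  have h0 : (0 : ℂ) = ∑ X : ↥S.parts, c X * S.superchar ↑X x := by
    rw [← hc x, if_neg hx]
  have : (Fintype.card G : ℂ) * ∑ X : ↥S.parts, c X * S.superchar ↑X x
      = ∑ X : ↥S.parts, S.superchar ↑X x := by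
    rw [Finset.mul_sum]
    refine Finset.sum_congr rfl fun X _ => ?_
    rw [← mul_assoc, mul_comm (Fintype.card G : ℂ) (c X), hcY X, one_mul]
  rw [← this, ← h0, mul_zero]

theorem exists_superchar_ne_zero (S : SCT G) (x : G) :
    ∃ X ∈ S.parts, S.superchar X x ≠ 0 := by
  by_contra hcon
  push_neg at hcon
  have hmem : (fun g : G => if g ∈ S.cls x then (1 : ℂ) else 0) ∈ CF S := by
    intro g h hh
    by_cases hg : g ∈ S.cls x
    · have : h ∈ S.cls x := by
        have := S.cls_eq x g hg
        rw [← this]; exact hh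
      show (if h ∈ S.cls x then (1 : ℂ) else 0) = (if g ∈ S.cls x then (1 : ℂ) else 0)
      rw [if_pos hg, if_pos this]
    · have : h ∉ S.cls x := by
        intro hhx
        have e1 := S.cls_eq x h hhx
        have e2 := S.cls_eq g h hh
        exact hg (by rw [← e1, e2]; exact S.mem_cls g)
      show (if h ∈ S.cls x then (1 : ℂ) else 0) = (if g ∈ S.cls x then (1 : ℂ) else 0)
      rw [if_neg hg, if_neg this]
  obtain ⟨c, hc⟩ := exists_coeffs S hmem
  have h1 := hc x
  rw [if_pos (S.mem_cls x)] at h1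
  have h2 : ∑ X : ↥S.parts, c X * S.superchar ↑X x = 0 :=
    Finset.sum_eq_zero fun X _ => by rw [hcon ↑X X.2, mul_zero]
  rw [h2] at h1
  exact one_ne_zero h1

end SCTAux

namespace SCTAux

open scoped Classical

variable {G : Type} [Group G] [Fintype G]

theorem derived_le_VS (S : SCT G) : S.derived ≤ S.VS := by
  rw [SCT.derived, SCT.comm, Subgroup.closure_le]
  rintro x ⟨g, -, k, hk, rfl⟩
  by_cases hnv : ∃ f ∈ S.IrrRel S.derived, f (g⁻¹ * k) ≠ 0
  · exact Subgroup.subset_closure hnv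
  · push_neg at hnv
    by_cases hx1 : g⁻¹ * k = 1
    · rw [hx1]
      exact S.VS.one_mem
    · exfalso
      have hxd : g⁻¹ * k ∈ S.derived :=
        Subgroup.subset_closure ⟨g, trivial, k, hk, rfl⟩
      have hsum := sum_superchar_eq_zero S hx1
      have hterm : ∀ X : ↥S.parts, S.superchar ↑X (g⁻¹ * k)
          = if S.derived ≤ charKer (S.superchar ↑X) then S.superchar ↑X 1 else 0 := by
        intro X
        by_cases hker : S.derived ≤ charKer (S.superchar ↑X)
        · rw [if_pos hker]
          have h2 : ∀ h : G, S.superchar ↑X ((g⁻¹ * k) * h) = S.superchar ↑X h :=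
            hker hxd
          have h3 := h2 1
          rwa [mul_one] at h3
        · rw [if_neg hker]
          exact hnv _ ⟨⟨↑X, X.2, rfl⟩, hker⟩
      rw [Finset.sum_congr rfl (fun X _ => hterm X)] at hsum
      rw [Finset.sum_ite, Finset.sum_const_zero, add_zero] at hsum
      obtain ⟨X₀, hX₀p, hX₀⟩ := exists_superchar_ne_zero S (g⁻¹ * k)
      have hX₀ker : S.derived ≤ charKer (S.superchar X₀) := by
        by_contra hk0
        exact hX₀ (hnv _ ⟨⟨X₀, hX₀p, rfl⟩, hk0⟩)
      have hn : ∀ X : ↥S.parts, ∃ m : ℕ, 0 < m ∧ S.superchar ↑X 1 = m :=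
        fun X => superchar_one S X.2
      choose m hpos hval using hn
      have hcast : ((∑ X ∈ Finset.univ.filter
          (fun X : ↥S.parts => S.derived ≤ charKer (S.superchar ↑X)), m X : ℕ) : ℂ) = 0 := by
        rw [Nat.cast_sum, ← hsum]
        exact Finset.sum_congr rfl fun X _ => (hval X).symm
      have hzero := Nat.cast_eq_zero.mp hcast
      have hX₀s : (⟨X₀, hX₀p⟩ : ↥S.parts) ∈ Finset.univ.filter
          (fun X : ↥S.parts => S.derived ≤ charKer (S.superchar ↑X)) :=
        Finset.mem_filter.mpr ⟨Finset.mem_univ _, hX₀ker⟩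
      have := Finset.sum_eq_zero_iff.mp hzero _ hX₀s
      exact (hpos ⟨X₀, hX₀p⟩).ne' this

theorem comm_mono (S : SCT G) {H K : Subgroup G} (h : H ≤ K) : S.comm H ≤ S.comm K :=
  Subgroup.closure_mono (by rintro x ⟨g, hg, k, hk, rfl⟩; exact ⟨g, h hg, k, hk, rfl⟩)

theorem Vseq_le_gamma (S : SCT G) : ∀ n, S.Vseq n ≤ S.gamma n
  | 0 => le_top
  | 1 => le_top
  | (n+2) => by
      have ih := Vseq_le_gamma S (n+1)
      show S.comm (S.Vseq (n+1)) ≤ S.comm (S.gamma (n+1))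
      exact comm_mono S ih

theorem gamma_le_Vseq (S : SCT G) : ∀ n, S.gamma (n+2) ≤ S.Vseq (n+1)
  | 0 => by
      show S.comm ⊤ ≤ S.VS
      exact derived_le_VS S
  | (n+1) => by
      have ih := gamma_le_Vseq S n
      show S.comm (S.gamma (n+2)) ≤ S.comm (S.Vseq (n+1))
      exact comm_mono S ih

end SCTAux

theorem sNilpotent_iff_Vseq_eq_bot' {G : Type} [Group G] [Fintype G] (S : SCT G) :
    (∃ n, S.gamma n = ⊥) ↔ ∃ n, S.Vseq n = ⊥ := by
  constructor
  · rintro ⟨n, hn⟩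
    exact ⟨n, le_bot_iff.mp (hn ▸ SCTAux.Vseq_le_gamma S n)⟩
  · rintro ⟨n, hn⟩
    rcases n with _ | m
    · refine ⟨2, le_bot_iff.mp ?_⟩
      have h := SCTAux.gamma_le_Vseq S 0
      have e : S.Vseq 1 = S.Vseq 0 := rfl
      rw [e, hn] at h
      exact h
    · refine ⟨m + 2, le_bot_iff.mp ?_⟩
      have h := SCTAux.gamma_le_Vseq S m
      rw [hn] at h
      exact h

/-- `G` is `S`-nilpotent (`γ_n(S) = 1` for some `n`) iff the series
`V_i(S)` terminates at the trivial subgroup. -/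
theorem sNilpotent_iff_Vseq_eq_bot (S : SCT G) :
    (∃ n, S.gamma n = ⊥) ↔ ∃ n, S.Vseq n = ⊥ := by
  exact sNilpotent_iff_Vseq_eq_bot' S
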